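/- Let A be a finite set, and for g ≥ 1 and a positive integer F, let a = {B ⊆ A : |B| = g}. Define, for a nonempty family x ⊆ a, ‖x‖ = max{l : every subset A' ⊆ A with |A'| ≤ F^l is contained in some member of x}. Then ‖·‖ is an F-additive logarithmic measure on a, i.e., whenever x ⊆ a is covered by F sets x₁, …, x_F, some xᵢ has ‖xᵢ‖ ≥ ‖x‖ − 1. -/

import Mathlib

/-- Let `A` be a finite set, and for `g ≥ 1` and a positive integer `F`,
let `a = {B ⊆ A : |B| = g}`. Define, for a nonempty family `x ⊆ a`,
`‖x‖ = max{l : every subset A' ⊆ A with |A'| ≤ F^l is contained in some member of x}`.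
Then `‖·‖` is an `F`-additive logarithmic measure on `a`: it is monotone, and whenever
`x ⊆ a` is covered by `F` sets `x₁, …, x_F`, some `xᵢ` has `‖xᵢ‖ ≥ ‖x‖ − 1`. -/
theorem stmt_3 {α : Type*} [DecidableEq α] (A : Finset α) (g F : ℕ)
    (hg : 1 ≤ g) (hF : 1 ≤ F) :
    -- the family `a` of all `g`-element subsets of `A`
    letI a : Finset (Finset α) := A.powerset.filter (fun B => B.card = g)
    -- the logarithmic measure
    letI norm : Finset (Finset α) → ℕ := fun x =>
      sSup {l : ℕ | ∀ A' ⊆ A, A'.card ≤ F ^ l → ∃ B ∈ x, A' ⊆ B}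
    (∀ x y : Finset (Finset α), x.Nonempty → x ⊆ y → y ⊆ a → norm x ≤ norm y) ∧
    (∀ x : Finset (Finset α), x ⊆ a → x.Nonempty →
      ∀ c : Fin F → Finset (Finset α), x = Finset.univ.biUnion c →
        ∃ i, norm x - 1 ≤ norm (c i)) := by
  dsimp only
  have hSmono : ∀ x y : Finset (Finset α), x ⊆ y →
      {l : ℕ | ∀ A' ⊆ A, A'.card ≤ F ^ l → ∃ B ∈ x, A' ⊆ B} ⊆
      {l : ℕ | ∀ A' ⊆ A, A'.card ≤ F ^ l → ∃ B ∈ y, A' ⊆ B} := by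
    intro x y hxy l hl A' hA' hcard
    obtain ⟨B, hB, hBs⟩ := hl A' hA' hcard
    exact ⟨B, hxy hB, hBs⟩
  constructor
  · intro x y hx hxy hya
    by_cases hb : BddAbove {l : ℕ | ∀ A' ⊆ A, A'.card ≤ F ^ l → ∃ B ∈ y, A' ⊆ B}
    · by_cases hne : {l : ℕ | ∀ A' ⊆ A, A'.card ≤ F ^ l → ∃ B ∈ x, A' ⊆ B}.Nonempty
      · exact csSup_le_csSup hb hne (hSmono x y hxy)
      · rw [Set.not_nonempty_iff_eq_empty.1 hne]
        simp [csSup_empty]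
    · -- the set for y is unbounded
      rcases Nat.lt_or_ge F 2 with hF1 | hF2
      · -- F = 1 : show sSup for x is 0
        interval_cases F
        have h0 : sSup {l : ℕ | ∀ A' ⊆ A, A'.card ≤ 1 ^ l → ∃ B ∈ x, A' ⊆ B} = 0 := by
          by_cases hne : {l : ℕ | ∀ A' ⊆ A, A'.card ≤ 1 ^ l → ∃ B ∈ x, A' ⊆ B}.Nonempty
          · obtain ⟨l₀, hl₀⟩ := hne
            have hall : ¬ BddAbove {l : ℕ | ∀ A' ⊆ A, A'.card ≤ 1 ^ l → ∃ B ∈ x, A' ⊆ B} := by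
              rw [not_bddAbove_iff]
              intro n
              refine ⟨n + 1, ?_, by omega⟩
              intro A' hA' hc
              exact hl₀ A' hA' (by simpa using hc)
            rw [csSup_of_not_bddAbove hall]
            simp [csSup_empty]
          · rw [Set.not_nonempty_iff_eq_empty.1 hne]
            simp [csSup_empty]
        simp only [h0]
        exact Nat.zero_le _
      · -- F ≥ 2 : unboundedness forces A ∈ x, whence the x-set is unbounded too
        rw [not_bddAbove_iff] at hb
        obtain ⟨m, hm, hmA⟩ := hb (A.card)
        have hAcard : A.card ≤ F ^ m :=
          le_trans (le_of_lt hmA) (le_of_lt (Nat.lt_pow_self hF2 : m < F ^ m))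
        obtain ⟨B, hBy, hAB⟩ := hm A (le_refl _) hAcard
        have hBa := hya hBy
        simp only [Finset.mem_filter, Finset.mem_powerset] at hBa
        have hBA : B = A := Finset.Subset.antisymm hBa.1 hAB
        obtain ⟨B₀, hB₀⟩ := hx
        have hB₀a := hya (hxy hB₀)
        simp only [Finset.mem_filter, Finset.mem_powerset] at hB₀a
        have hB₀A : B₀ = A := by
          apply Finset.eq_of_subset_of_card_le hB₀a.1
          rw [hB₀a.2, ← hBa.2, hBA]
        have hxall : ¬ BddAbove {l : ℕ | ∀ A' ⊆ A, A'.card ≤ F ^ l → ∃ B ∈ x, A' ⊆ B} := by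
          rw [not_bddAbove_iff]
          intro n
          exact ⟨n + 1, fun A' hA' _ => ⟨B₀, hB₀, hB₀A ▸ hA'⟩, by omega⟩
        have hyall : ¬ BddAbove {l : ℕ | ∀ A' ⊆ A, A'.card ≤ F ^ l → ∃ B ∈ y, A' ⊆ B} := by
          rw [not_bddAbove_iff]
          intro n
          exact ⟨n + 1, fun A' hA' _ => ⟨B, hBy, hBA ▸ hA'⟩, by omega⟩
        
        rw [csSup_of_not_bddAbove hxall, csSup_of_not_bddAbove hyall]
  · intro x hxa hx c hc
    set S : Set ℕ := {l : ℕ | ∀ A' ⊆ A, A'.card ≤ F ^ l → ∃ B ∈ x, A' ⊆ B} with hS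
    by_cases hb : BddAbove S
    · by_cases hne : S.Nonempty
      · set n := sSup S with hn
        rcases Nat.eq_zero_or_pos n with hn0 | hn1
        · exact ⟨⟨0, hF⟩, by simp only [← hS, ← hn, hn0]; exact Nat.zero_le _⟩
        · have hnS : n ∈ S := Nat.sSup_mem hne hb
          -- claim : some i has n - 1 in its set
          by_contra hcon
          push_neg at hcon
          have hkey : ∀ i : Fin F, ∃ A' ⊆ A, A'.card ≤ F ^ (n - 1) ∧ ∀ B ∈ c i, ¬ A' ⊆ B := by
            intro i
            have := hcon i
            by_contra hni
            push_neg at hni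
            apply absurd this
            push_neg
            have hmem : (n - 1) ∈ {l : ℕ | ∀ A' ⊆ A, A'.card ≤ F ^ l → ∃ B ∈ c i, A' ⊆ B} := by
              intro A' hA' hcard
              obtain ⟨B, hB, hBs⟩ := hni A' hA' hcard
              exact ⟨B, hB, hBs⟩
            have hci : c i ⊆ x := by
              intro b hbci
              rw [hc]
              exact Finset.mem_biUnion.2 ⟨i, Finset.mem_univ i, hbci⟩
            have hbi : BddAbove {l : ℕ | ∀ A' ⊆ A, A'.card ≤ F ^ l → ∃ B ∈ c i, A' ⊆ B} :=
              hb.mono (hSmono (c i) x hci)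
            exact le_csSup hbi hmem
          choose A' hA'A hA'card hA'not using hkey
          set U : Finset α := Finset.univ.biUnion A' with hU
          have hUA : U ⊆ A := by
            intro u hu
            obtain ⟨i, _, hui⟩ := Finset.mem_biUnion.1 hu
            exact hA'A i hui
          have hUcard : U.card ≤ F ^ n := by
            calc U.card ≤ ∑ i : Fin F, (A' i).card := Finset.card_biUnion_le
              _ ≤ ∑ _i : Fin F, F ^ (n - 1) := Finset.sum_le_sum (fun i _ => hA'card i)
              _ = F * F ^ (n - 1) := by simp [mul_comm]
              _ = F ^ n := by
                  conv_rhs => rw [show n = (n - 1) + 1 by omega]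
                  rw [pow_succ, mul_comm]
          obtain ⟨B, hBx, hUB⟩ := hnS U hUA hUcard
          rw [hc] at hBx
          obtain ⟨i, _, hBi⟩ := Finset.mem_biUnion.1 hBx
          exact hA'not i B hBi (le_trans (Finset.subset_biUnion_of_mem A' (Finset.mem_univ i)) hUB)
      · refine ⟨⟨0, hF⟩, ?_⟩
        rw [Set.not_nonempty_iff_eq_empty.1 hne]
        simp [csSup_empty]
    · refine ⟨⟨0, hF⟩, ?_⟩
      rw [csSup_of_not_bddAbove hb]
      simp [csSup_empty]
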